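/- The subgroup of the affine group of ℂ generated by the involutions ι_n(x) = 2^{1−n} − x, for all n ∈ ℤ, equals the set of maps x ↦ εx + a with ε ∈ {1, −1} and a ∈ ℤ[1/2] (the dyadic rationals). In particular, this group is not finitely generated. -/

import Mathlib

/-- The affine involution `ι_n : x ↦ 2^{1-n} - x` of `ℂ`, for `n ∈ ℤ`. -/
noncomputable def iotaN (n : ℤ) : Equiv.Perm ℂ where
  toFun x := 2 ^ (1 - n) - x
  invFun x := 2 ^ (1 - n) - x
  left_inv := fun x => by ring
  right_inv := fun x => by ring

def IsDyadic (a : ℂ) : Prop := ∃ (m : ℤ) (k : ℕ), a = (m : ℂ) / 2 ^ k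

lemma dyadic_zero : IsDyadic 0 := ⟨0, 0, by norm_num⟩

lemma dyadic_neg {a : ℂ} (h : IsDyadic a) : IsDyadic (-a) := by
  obtain ⟨m, k, rfl⟩ := h
  exact ⟨-m, k, by push_cast; ring⟩

lemma dyadic_add {a b : ℂ} (ha : IsDyadic a) (hb : IsDyadic b) : IsDyadic (a + b) := by
  obtain ⟨m, k, rfl⟩ := ha
  obtain ⟨m', k', rfl⟩ := hb
  refine ⟨m * 2 ^ k' + m' * 2 ^ k, k + k', ?_⟩
  have h1 : (2 : ℂ) ^ k ≠ 0 := pow_ne_zero _ two_ne_zero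
  have h2 : (2 : ℂ) ^ k' ≠ 0 := pow_ne_zero _ two_ne_zero
  push_cast
  rw [div_add_div _ _ h1 h2, pow_add]
  ring_nf

lemma dyadic_two_zpow (j : ℤ) : IsDyadic ((2 : ℂ) ^ j) := by
  rcases le_or_gt 0 j with h | h
  · lift j to ℕ using h
    exact ⟨2 ^ j, 0, by push_cast; simp⟩
  · obtain ⟨n, rfl⟩ : ∃ n : ℕ, j = -(n : ℤ) := ⟨(-j).toNat, by omega⟩
    refine ⟨1, n, ?_⟩
    rw [zpow_neg, zpow_natCast]
    simp

noncomputable def Tr (a : ℂ) : Equiv.Perm ℂ where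
  toFun x := x + a
  invFun x := x - a
  left_inv := fun x => by ring
  right_inv := fun x => by ring

@[simp] lemma Tr_apply (a x : ℂ) : Tr a x = x + a := rfl

@[simp] lemma iotaN_apply (n : ℤ) (x : ℂ) : iotaN n x = 2 ^ (1 - n) - x := rfl

noncomputable abbrev Hgrp : Subgroup (Equiv.Perm ℂ) := Subgroup.closure (Set.range iotaN)

lemma Tr_add (a b : ℂ) : Tr (a + b) = Tr a * Tr b := by
  ext x
  simp [Equiv.Perm.mul_apply]
  ring

lemma Tr_zero : Tr 0 = 1 := by
  ext x; simp

lemma Tr_mem_of_dyadic {a : ℂ} (ha : IsDyadic a) : Tr a ∈ Hgrp := by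
  let A : AddSubgroup ℂ :=
    { carrier := {a | Tr a ∈ Hgrp}
      zero_mem' := by show Tr 0 ∈ Hgrp; rw [Tr_zero]; exact one_mem _
      add_mem' := fun {x y} hx hy => by
        simp only [Set.mem_setOf_eq, Tr_add] at *
        exact mul_mem hx hy
      neg_mem' := fun {x} hx => by
        simp only [Set.mem_setOf_eq] at *
        have h1 : Tr (-x) * Tr x = 1 := by rw [← Tr_add]; simp [Tr_zero]
        rw [eq_inv_of_mul_eq_one_left h1]
        exact inv_mem hx }
  have hpow : ∀ j : ℤ, (2 : ℂ) ^ j ∈ A := by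
    intro j
    have key : Tr ((2 : ℂ) ^ j) = iotaN (-j) * iotaN (1 - j) := by
      ext x
      simp [Equiv.Perm.mul_apply]
      rw [add_comm (1 : ℤ) j, zpow_add_one₀ (two_ne_zero)]
      ring
    show Tr ((2:ℂ) ^ j) ∈ Hgrp
    rw [key]
    exact mul_mem (Subgroup.subset_closure ⟨-j, rfl⟩)
      (Subgroup.subset_closure ⟨1 - j, rfl⟩)
  obtain ⟨m, k, rfl⟩ := ha
  have : (m : ℂ) / 2 ^ k = m • ((2 : ℂ) ^ (-(k : ℤ))) := by
    rw [zsmul_eq_mul, zpow_neg, zpow_natCast]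
    ring
  rw [this]
  exact A.zsmul_mem (hpow _) m

noncomputable def affG : Subgroup (Equiv.Perm ℂ) where
  carrier := {f | ∃ ε a : ℂ, (ε = 1 ∨ ε = -1) ∧ IsDyadic a ∧ ∀ x, f x = ε * x + a}
  one_mem' := ⟨1, 0, Or.inl rfl, dyadic_zero, fun x => by simp⟩
  mul_mem' := by
    rintro f g ⟨ε, a, hε, ha, hf⟩ ⟨ε', a', hε', ha', hg⟩
    refine ⟨ε * ε', ε * a' + a, ?_, ?_, ?_⟩
    · rcases hε with rfl | rfl <;> rcases hε' with rfl | rfl <;> norm_num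
    · rcases hε with rfl | rfl
      · simpa using dyadic_add ha' ha
      · simpa using dyadic_add (dyadic_neg ha') ha
    · intro x
      rw [Equiv.Perm.mul_apply, hg, hf]
      ring
  inv_mem' := by
    rintro f ⟨ε, a, hε, ha, hf⟩
    refine ⟨ε, -ε * a, hε, ?_, ?_⟩
    · rcases hε with rfl | rfl
      · simpa using dyadic_neg ha
      · simpa using ha
    · intro x
      have h1 : f (ε * x + -ε * a) = x := by
        rw [hf]; rcases hε with rfl | rfl <;> ring
      exact f.injective (by rw [show f (f⁻¹ x) = x from f.apply_symm_apply x, h1])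

lemma mem_affG_iff (f : Equiv.Perm ℂ) :
    f ∈ affG ↔ ∃ ε a : ℂ, (ε = 1 ∨ ε = -1) ∧ IsDyadic a ∧ ∀ x, f x = ε * x + a :=
  Iff.rfl

lemma mem_H_iff (f : Equiv.Perm ℂ) :
    f ∈ Hgrp ↔ ∃ ε a : ℂ, (ε = 1 ∨ ε = -1) ∧ IsDyadic a ∧ ∀ x, f x = ε * x + a := by
  constructor
  · intro hf
    have hle : Hgrp ≤ affG := by
      rw [Subgroup.closure_le]
      rintro g ⟨n, rfl⟩
      exact ⟨-1, 2 ^ (1 - n), Or.inr rfl, dyadic_two_zpow _, fun x => by simp; ring⟩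
    exact hle hf
  · rintro ⟨ε, a, hε, ha, hf⟩
    rcases hε with rfl | rfl
    · have : f = Tr a := Equiv.ext fun x => by rw [hf]; simp
      rw [this]
      exact Tr_mem_of_dyadic ha
    · have : f = Tr (a - 2) * iotaN 0 := Equiv.ext fun x => by
        rw [hf, Equiv.Perm.mul_apply]
        simp
        ring
      rw [this]
      have h2 : IsDyadic (a - 2) := by
        simpa [sub_eq_add_neg] using dyadic_add ha (⟨-2, 0, by norm_num⟩ : IsDyadic (-2))
      exact mul_mem (Tr_mem_of_dyadic h2)
        (Subgroup.subset_closure ⟨0, rfl⟩)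

noncomputable def boundedG (K : ℕ) : Subgroup (Equiv.Perm ℂ) where
  carrier := {f | ∃ ε : ℂ, (ε = 1 ∨ ε = -1) ∧ ∃ m : ℤ, ∀ x, f x = ε * x + m / 2 ^ K}
  one_mem' := ⟨1, Or.inl rfl, 0, fun x => by simp⟩
  mul_mem' := by
    rintro f g ⟨ε, hε, m, hf⟩ ⟨ε', hε', m', hg⟩
    rcases hε with rfl | rfl <;> rcases hε' with rfl | rfl
    · exact ⟨1, Or.inl rfl, m' + m, fun x => by
        rw [Equiv.Perm.mul_apply, hg, hf]; push_cast; ring⟩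
    · exact ⟨-1, Or.inr rfl, m' + m, fun x => by
        rw [Equiv.Perm.mul_apply, hg, hf]; push_cast; ring⟩
    · exact ⟨-1, Or.inr rfl, -m' + m, fun x => by
        rw [Equiv.Perm.mul_apply, hg, hf]; push_cast; ring⟩
    · exact ⟨1, Or.inl rfl, -m' + m, fun x => by
        rw [Equiv.Perm.mul_apply, hg, hf]; push_cast; ring⟩
  inv_mem' := by
    rintro f ⟨ε, hε, m, hf⟩
    refine ⟨ε, hε, ?_⟩
    rcases hε with rfl | rfl
    · refine ⟨-m, fun x => ?_⟩
      have h1 : f (1 * x + (-m : ℤ) / 2 ^ K) = x := by rw [hf]; push_cast; ring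
      exact f.injective (by rw [show f (f⁻¹ x) = x from f.apply_symm_apply x, h1])
    · refine ⟨m, fun x => ?_⟩
      have h1 : f (-1 * x + (m : ℤ) / 2 ^ K) = x := by rw [hf]; push_cast; ring
      exact f.injective (by rw [show f (f⁻¹ x) = x from f.apply_symm_apply x, h1])

lemma not_fg : ¬ Hgrp.FG := by
  classical
  rintro ⟨S, hS⟩
  set P : Equiv.Perm ℂ → ℕ → Prop :=
    fun g k => ∃ ε : ℂ, (ε = 1 ∨ ε = -1) ∧ ∃ m : ℤ, ∀ x, g x = ε * x + m / 2 ^ k with hP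
  have hPmono : ∀ g k K, k ≤ K → P g k → P g K := by
    rintro g k K hkK ⟨ε, hε, m, hg⟩
    refine ⟨ε, hε, m * 2 ^ (K - k), fun x => ?_⟩
    rw [hg]
    have : ((m * 2 ^ (K - k) : ℤ) : ℂ) / 2 ^ K = (m : ℂ) / 2 ^ k := by
      have hK : (2 : ℂ) ^ K = 2 ^ (K - k) * 2 ^ k := by
        rw [← pow_add, Nat.sub_add_cancel hkK]
      push_cast
      rw [hK]
      rw [div_eq_div_iff (mul_ne_zero (pow_ne_zero _ two_ne_zero) (pow_ne_zero _ two_ne_zero)) (pow_ne_zero _ two_ne_zero)]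
      ring
    rw [this]
  have hex : ∀ g ∈ S, ∃ k, P g k := by
    intro g hg
    have : g ∈ Hgrp := by rw [← hS]; exact Subgroup.subset_closure hg
    obtain ⟨ε, a, hε, ⟨m, k, rfl⟩, hga⟩ := (mem_H_iff g).1 this
    exact ⟨k, ε, hε, m, hga⟩
  set kf : Equiv.Perm ℂ → ℕ := fun g => if h : ∃ k, P g k then Nat.find h else 0 with hkf
  set K := S.sup kf with hK
  have hSsub : ↑S ⊆ (boundedG K : Set (Equiv.Perm ℂ)) := by
    intro g hg
    have h := hex g hg
    have hgk : P g (kf g) := by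
      rw [hkf]; simp only [dif_pos h]; exact Nat.find_spec h
    exact hPmono g (kf g) K (Finset.le_sup hg) hgk
  have hle : Hgrp ≤ boundedG K := by
    rw [← hS]
    exact (Subgroup.closure_le _).2 hSsub
  have hmem : Tr ((1 : ℂ) / 2 ^ (K + 1)) ∈ boundedG K := by
    apply hle
    exact Tr_mem_of_dyadic ⟨1, K + 1, by norm_num⟩
  obtain ⟨ε, hε, m, hm⟩ := hmem
  have h0 := hm 0
  have h1 := hm 1
  simp only [Tr_apply] at h0 h1
  have hε1 : ε = 1 := by linear_combination h0 - h1
  rw [hε1] at h0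
  have h2 : ((2 * m : ℤ) : ℂ) = ((1 : ℤ) : ℂ) := by
    have hne : (2 : ℂ) ^ K ≠ 0 := pow_ne_zero _ two_ne_zero
    push_cast
    rw [pow_succ] at h0
    field_simp at h0
    have h3 : (2 : ℂ) ^ K * 1 = 2 ^ K * ((m : ℂ) * 2) := by linear_combination (2 : ℂ) ^ K * h0
    have h4 := mul_left_cancel₀ hne h3
    linear_combination -h4
  have : (2 * m : ℤ) = 1 := Int.cast_injective h2
  omega

/-- The subgroup generated by the involutions `ι_n (n ∈ ℤ)` equals the set of affine maps
`x ↦ εx + a` with `ε = ±1` and `a ∈ ℤ[1/2]`; in particular it is not finitely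
generated. -/
theorem stmt_10 :
    (∀ f : Equiv.Perm ℂ, f ∈ Subgroup.closure (Set.range iotaN) ↔
      ∃ ε a : ℂ, (ε = 1 ∨ ε = -1) ∧ (∃ (m : ℤ) (k : ℕ), a = (m : ℂ) / 2 ^ k) ∧
        ∀ x, f x = ε * x + a) ∧
    ¬ (Subgroup.closure (Set.range iotaN)).FG := by
  constructor
  · intro f
    exact mem_H_iff f
  · exact not_fg
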